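/- arXiv:1608.08087 — 6 statements merged into one kernel-verified Lean document; each statement's English description precedes it below -/
import Mathlib

section
/- The rotation angle 6·arg(-1 + (1-2q)√3·i) is a multiple of 2π if and only if q = 0, q = 1/2, or q = 1. Equivalently, the complex number (-1 + (1-2q)√3·i)^6 is a positive real multiple of | -1 + (1-2q)√3·i |^6 exactly for these q. -/
open Complex Real

/-- The complex number whose argument (times 6) gives the rotation angle of `T_q`. -/
noncomputable def zq (q : ℝ) : ℂ := -1 + ((1 - 2 * q : ℝ) : ℂ) * (Real.sqrt 3 : ℂ) * Complex.I

lemma zq_pow (q : ℝ) : (zq q)^6 = Complex.mk ((9*(1-2*q)^2-1)^2 - 3*(1-2*q)^2*(3-3*(1-2*q)^2)^2)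
    (6*(1-2*q)*(Real.sqrt 3)*(9*(1-2*q)^2-1)*(1-(1-2*q)^2)) := by
  have hs : Real.sqrt 3 ^ 2 = 3 := Real.sq_sqrt (by norm_num)
  have h3 : Real.sqrt 3 ^ 3 = 3 * Real.sqrt 3 := by rw [pow_succ, hs]
  have h4 : Real.sqrt 3 ^ 4 = 9 := by rw [show (4:ℕ)=2*2 from rfl, pow_mul, hs]; norm_num
  have h5 : Real.sqrt 3 ^ 5 = 9 * Real.sqrt 3 := by rw [pow_succ, h4]
  have h6 : Real.sqrt 3 ^ 6 = 27 := by rw [pow_succ, h5, mul_assoc, Real.mul_self_sqrt] <;> norm_num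
  apply Complex.ext <;> simp [zq, pow_succ, Complex.ext_iff, mul_re, mul_im] <;> ring_nf <;>
    simp only [h6, h5, h4, h3, hs] <;> ring

lemma zq_abs (q : ℝ) : (‖zq q‖)^6 = (1+3*(1-2*q)^2)^3 := by
  have hs : Real.sqrt 3 ^ 2 = 3 := Real.sq_sqrt (by norm_num)
  have h : (‖zq q‖)^2 = 1+3*(1-2*q)^2 := by
    rw [← Complex.normSq_eq_norm_sq]
    simp [zq, Complex.normSq_apply]
    nlinarith [hs]
  calc (‖zq q‖)^6 = ((‖zq q‖)^2)^3 := by ring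
  _ = (1+3*(1-2*q)^2)^3 := by rw [h]

theorem stmt1 (q : ℝ) :
    (zq q) ^ 6 = ((‖zq q‖) ^ 6 : ℝ) ↔ q = 0 ∨ q = 1 / 2 ∨ q = 1 := by
  have hspos : (0:ℝ) < Real.sqrt 3 := Real.sqrt_pos.mpr (by norm_num)
  rw [zq_pow, zq_abs, Complex.ext_iff]
  simp only [Complex.ofReal_re, Complex.ofReal_im]
  constructor
  · rintro ⟨hre, him⟩
    have him' : (1-2*q) * ((9*(1-2*q)^2-1)*(1-(1-2*q)^2)) = 0 := by
      have h6s : (6 * Real.sqrt 3 : ℝ) ≠ 0 := by positivity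
      apply mul_left_cancel₀ h6s
      rw [mul_zero]; linear_combination him
    rcases mul_eq_zero.mp him' with h | h
    · right; left; linarith
    · rcases mul_eq_zero.mp h with h | h
      · exfalso
        have hx : (1-2*q)^2 = 1/9 := by linarith
        rw [hx] at hre; norm_num at hre
      · have h2 : ((1-2*q)-1)*((1-2*q)+1) = 0 := by linear_combination -h
        rcases mul_eq_zero.mp h2 with h | h
        · left; linarith
        · right; right; linarith
  · rintro (rfl | rfl | rfl) <;> norm_num
end

section
/- For real numbers q, q', the complex numbers z_q = -1 + (1-2q)√3·i and z_{q'} = -1 + (1-2q')√3·i satisfy (z_q/|z_q|)^6 = (z_{q'}/|z_{q'}|)^6 (i.e. T_q = T_{q'}) if and only if q' = q, or q' = (2q-1)/(3q-1) (when q ≠ 1/3), or q' = (q-1)/(3q-2) (when q ≠ 2/3). -/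
open Complex Real ComplexConjugate

lemma cube_im (w : ℂ) : (w ^ 3).im = 3 * w.re ^ 2 * w.im - w.im ^ 3 := by
  simp [pow_succ, Complex.mul_im, Complex.mul_re]
  ring

theorem stmt3 (q q' : ℝ) :
    (zq q / (‖zq q‖ : ℝ)) ^ 6 = (zq q' / (‖zq q'‖ : ℝ)) ^ 6 ↔
      q' = q ∨ (q ≠ 1 / 3 ∧ q' = (2 * q - 1) / (3 * q - 1)) ∨
        (q ≠ 2 / 3 ∧ q' = (q - 1) / (3 * q - 2)) := by
  have hs : Real.sqrt 3 ^ 2 = 3 := Real.sq_sqrt (by norm_num)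
  have hs0 : Real.sqrt 3 ≠ 0 := by positivity
  have hre : ∀ t : ℝ, (zq t).re = -1 := by intro t; simp [zq]
  have him : ∀ t : ℝ, (zq t).im = (1 - 2*t) * Real.sqrt 3 := by intro t; simp [zq]
  have hne : ∀ t : ℝ, zq t ≠ 0 := by
    intro t h
    apply_fun Complex.re at h
    rw [hre t] at h
    simp at h
  have habs : ∀ t : ℝ, ((‖zq t‖ : ℝ) : ℂ) ≠ 0 := by
    intro t
    simpa using norm_ne_zero_iff.mpr (hne t)
  have hcast : ∀ t : ℝ, ((‖zq t‖ : ℝ) : ℂ) ^ 6 = (zq t * conj (zq t)) ^ 3 := by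
    intro t
    rw [Complex.mul_conj, ← Complex.sq_norm]
    push_cast
    ring
  set w := zq q * conj (zq q') with hw
  have hwre : w.re = 4 - 6*q - 6*q' + 12*q*q' := by
    rw [hw, Complex.mul_re, Complex.conj_re, Complex.conj_im, hre q, hre q', him q, him q']
    linear_combination ((1-2*q)*(1-2*q'))*hs
  have hwim : w.im = 2*(q-q') * Real.sqrt 3 := by
    rw [hw, Complex.mul_im, Complex.conj_re, Complex.conj_im, hre q, hre q', him q, him q']
    ring
  have key : (w^3).im = 96 * Real.sqrt 3 *
      ((q - q') * ((1 - 2*q - q'*(1-3*q)) * (1 - q - q'*(2-3*q)))) := by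
    rw [cube_im, hwre, hwim]
    linear_combination (-8*(q-q')^3*Real.sqrt 3) * hs
  -- main chain
  rw [div_pow, div_pow, div_eq_div_iff (pow_ne_zero 6 (habs q)) (pow_ne_zero 6 (habs q')),
    hcast q, hcast q']
  have factor : ∀ (a b : ℂ), a^6 * (b * conj b)^3 = (a * conj b)^3 * (a*b)^3 := by
    intro a b; ring
  rw [factor, factor, mul_comm (zq q') (zq q)]
  have hpow : (zq q * zq q') ^ 3 ≠ 0 := pow_ne_zero 3 (mul_ne_zero (hne q) (hne q'))
  have step : (zq q * conj (zq q'))^3 * (zq q * zq q')^3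
      = (zq q' * conj (zq q))^3 * (zq q * zq q')^3 ↔ (w^3).im = 0 := by
    have hvu : zq q' * conj (zq q) = conj w := by
      rw [hw, map_mul, Complex.conj_conj]; ring
    constructor
    · intro h
      have h2 := mul_right_cancel₀ hpow h
      rw [hvu, ← map_pow] at h2
      exact (Complex.conj_eq_iff_im.mp h2.symm)
    · intro h
      rw [hvu, ← map_pow, Complex.conj_eq_iff_im.mpr h]
  rw [step, key]
  have h96 : (96 : ℝ) * Real.sqrt 3 ≠ 0 := by positivity
  rw [mul_eq_zero]
  simp only [h96, false_or]
  constructor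
  · intro h
    rcases mul_eq_zero.1 h with h | h
    · left; linarith
    rcases mul_eq_zero.1 h with h | h
    · right; left
      have hq : q ≠ 1/3 := by
        intro hq; rw [hq] at h; norm_num at h
      refine ⟨hq, ?_⟩
      have h31 : 3*q - 1 ≠ 0 := by
        intro hh; apply hq; linarith
      rw [eq_div_iff h31]
      linear_combination h
    · right; right
      have hq : q ≠ 2/3 := by
        intro hq; rw [hq] at h; norm_num at h
      refine ⟨hq, ?_⟩
      have h32 : 3*q - 2 ≠ 0 := by
        intro hh; apply hq; linarith
      rw [eq_div_iff h32]
      linear_combination h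
  · rintro (h | ⟨hq, h⟩ | ⟨hq, h⟩)
    · rw [h]; ring
    · have h31 : 3*q - 1 ≠ 0 := by intro hh; apply hq; linarith
      have hh : q' * (3*q - 1) = 2*q - 1 := by
        rw [h]; exact div_mul_cancel₀ _ h31
      linear_combination (q - q')*(1 - q - q'*(2-3*q))*hh
    · have h32 : 3*q - 2 ≠ 0 := by intro hh; apply hq; linarith
      have hh : q' * (3*q - 2) = q - 1 := by
        rw [h]; exact div_mul_cancel₀ _ h32
      linear_combination (q - q')*(1 - 2*q - q'*(1-3*q))*hh
end

section
/- For real numbers q, q', the rotations by 6·arg(-1+(1-2q)√3 i) and 6·arg(-1+(1-2q')√3 i) are mutually inverse (i.e. the product of the unit complex sixth powers equals 1) if and only if q' = 1-q, or q' = (2q-1)/(3q-2) (when q ≠ 2/3), or q' = q/(3q-1) (when q ≠ 1/3). -/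
open Complex Real

theorem stmt4 (q q' : ℝ) :
    ((zq q * zq q') / (‖zq q * zq q'‖ : ℝ)) ^ 6 = 1 ↔
      q' = 1 - q ∨ (q ≠ 2 / 3 ∧ q' = (2 * q - 1) / (3 * q - 2)) ∨
        (q ≠ 1 / 3 ∧ q' = q / (3 * q - 1)) := by
  set s : ℝ := Real.sqrt 3 with hsdef
  have hs : s ^ 2 = 3 := Real.sq_sqrt (by norm_num)
  have hs0 : s ≠ 0 := by
    intro h; rw [h] at hs; norm_num at hs
  set z : ℂ := zq q * zq q' with hzdef
  have hzq : ∀ r : ℝ, zq r ≠ 0 := by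
    intro r h
    have := congrArg Complex.re h
    simp [zq] at this
  have hz : z ≠ 0 := mul_ne_zero (hzq q) (hzq q')
  have hA : (0:ℝ) < ‖z‖ := norm_pos_iff.mpr hz
  -- Step 1: reduce to Im (z^3) = 0
  have key : ((z / ((‖z‖ : ℝ) : ℂ)) ^ 6 = 1) ↔ (z ^ 3).im = 0 := by
    rw [div_pow, div_eq_one_iff_eq (by exact_mod_cast pow_ne_zero 6 hA.ne')]
    constructor
    · intro h
      have h2 : (z ^ 3 - ((‖z‖ : ℝ) : ℂ) ^ 3) * (z ^ 3 + ((‖z‖ : ℝ) : ℂ) ^ 3) = 0 := by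
        linear_combination h
      rcases mul_eq_zero.mp h2 with h3 | h3
      · have : z ^ 3 = ((‖z‖ : ℝ) : ℂ) ^ 3 := by linear_combination h3
        rw [this]
        simp [← Complex.ofReal_pow]
      · have : z ^ 3 = -((‖z‖ : ℝ) : ℂ) ^ 3 := by linear_combination h3
        rw [this]
        simp [← Complex.ofReal_pow]
    · intro h
      set r : ℝ := (z ^ 3).re with hr
      have h1 : z ^ 3 = ((r : ℝ) : ℂ) := by
        apply Complex.ext <;> simp [h, hr]
      have habs : ‖z‖ ^ 3 = |r| := by
        rw [← norm_pow, h1, Complex.norm_real, Real.norm_eq_abs]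
      calc z ^ 6 = ((r : ℝ) : ℂ) ^ 2 := by rw [show z ^ 6 = (z ^ 3) ^ 2 by ring, h1]
        _ = ((r ^ 2 : ℝ) : ℂ) := by push_cast; ring
        _ = ((|r| ^ 2 : ℝ) : ℂ) := by rw [_root_.sq_abs]
        _ = ((‖z‖ : ℝ) : ℂ) ^ 6 := by
            rw [← habs]
            push_cast
            ring
  rw [key]
  -- Step 2: compute Im (z^3)
  have hre : z.re = 1 - (1 - 2*q) * (1 - 2*q') * s ^ 2 := by
    simp [hzdef, zq, Complex.mul_re]; ring
  have him0 : z.im = -((1 - 2*q) + (1 - 2*q')) * s := by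
    simp [hzdef, zq, Complex.mul_im]; ring
  have h3im : (z ^ 3).im = 3 * z.re ^ 2 * z.im - z.im ^ 3 := by
    simp [pow_succ, Complex.mul_im, Complex.mul_re]; ring
  have him : (z ^ 3).im =
      -96 * s * ((1 - q - q') * ((3*q*q' - q - q') * (3*q*q' - 2*q - 2*q' + 1))) := by
    rw [h3im, hre, him0]
    linear_combination (s * (2 - 2*q - 2*q') *
      (3 * (1-2*q) * (1-2*q') * (2 - (1-2*q)*(1-2*q')*s^2 - 3*(1-2*q)*(1-2*q'))
        + (2 - 2*q - 2*q')^2)) * hs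
  rw [him]
  constructor
  · intro h
    have h' : (1 - q - q') * ((3*q*q' - q - q') * (3*q*q' - 2*q - 2*q' + 1)) = 0 := by
      have hns : (-96 : ℝ) * s ≠ 0 := by
        intro h0
        rcases mul_eq_zero.mp h0 with h0 | h0
        · norm_num at h0
        · exact hs0 h0
      rcases mul_eq_zero.mp h with h0 | h0
      · exact absurd h0 hns
      · exact h0
    rcases mul_eq_zero.mp h' with h1 | h1
    · left; linarith
    rcases mul_eq_zero.mp h1 with h1 | h1
    · right; right
      have hq : q ≠ 1/3 := by
        intro hq; rw [hq] at h1; nlinarith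
      refine ⟨hq, ?_⟩
      have hd : 3*q - 1 ≠ 0 := by
        intro hd; apply hq; linarith
      rw [eq_div_iff hd]
      linarith
    · right; left
      have hq : q ≠ 2/3 := by
        intro hq; rw [hq] at h1; nlinarith
      refine ⟨hq, ?_⟩
      have hd : 3*q - 2 ≠ 0 := by
        intro hd; apply hq; linarith
      rw [eq_div_iff hd]
      linarith
  · rintro (h | ⟨hq, h⟩ | ⟨hq, h⟩)
    · rw [h]; ring
    · have hd : 3*q - 2 ≠ 0 := by
        intro hd; apply hq; linarith
      have e : 3 * q * ((2 * q - 1) / (3 * q - 2)) - 2 * q - 2 * ((2 * q - 1) / (3 * q - 2)) + 1 = 0 := by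
        rw [div_eq_mul_inv]; linear_combination (2 * q - 1) * mul_inv_cancel₀ hd
      rw [h, e]; ring
    · have hd : 3*q - 1 ≠ 0 := by
        intro hd; apply hq; linarith
      have e : 3 * q * (q / (3 * q - 1)) - q - q / (3 * q - 1) = 0 := by
        rw [div_eq_mul_inv]; linear_combination q * mul_inv_cancel₀ hd
      rw [h, e]; ring
end

section
/- For real numbers q and q', the composition of the rotations by 6·arg(-1+(1-2q)√3 i) and 6·arg(-1+(1-2q')√3 i) equals the rotation by 6·arg(-1+(1-2q'')√3 i), where q'' = (3qq' - 2(q+q') + 1)/(6qq' - 3(q+q') + 1), provided 6qq' - 3(q+q') + 1 ≠ 0. -/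
open Complex Real

theorem stmt5 (q q' : ℝ) (h : 6 * q * q' - 3 * (q + q') + 1 ≠ 0) :
    ((zq q * zq q') / (‖zq q * zq q'‖ : ℝ)) ^ 6 =
      (zq ((3 * q * q' - 2 * (q + q') + 1) / (6 * q * q' - 3 * (q + q') + 1)) /
        (‖zq ((3 * q * q' - 2 * (q + q') + 1) / (6 * q * q' - 3 * (q + q') + 1))‖ : ℝ)) ^ 6 := by
  set D : ℝ := 6 * q * q' - 3 * (q + q') + 1 with hD
  set q'' : ℝ := (3 * q * q' - 2 * (q + q') + 1) / D with hq''
  have h3 : (Real.sqrt 3 : ℂ) * (Real.sqrt 3 : ℂ) = 3 := by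
    rw [← Complex.ofReal_mul, Real.mul_self_sqrt (by norm_num : (0:ℝ) ≤ 3)]
    norm_num
  have hDc : (D : ℂ) ≠ 0 := by exact_mod_cast h
  have e : (D : ℂ) * zq q'' = -(D : ℂ) + ((q + q' - 1 : ℝ) : ℂ) * (Real.sqrt 3 : ℂ) * Complex.I := by
    simp only [zq, hq'']
    push_cast
    field_simp
    push_cast [hD]
    ring
  have key : zq q * zq q' = ((2 * D : ℝ) : ℂ) * zq q'' := by
    have : zq q * zq q' = 2 * ((D : ℂ) * zq q'') := by
      rw [e]
      simp only [zq]
      push_cast [hD]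
      linear_combination ((1 - 2*(q:ℂ)) * (1 - 2*(q':ℂ)) * Complex.I^2) * h3 +
        (3 * (1 - 2*(q:ℂ)) * (1 - 2*(q':ℂ))) * Complex.I_sq
    rw [this]; push_cast; ring
  have h2D : (2 * D : ℝ) ≠ 0 := by simpa using h
  rw [key, norm_mul, Complex.norm_real, Real.norm_eq_abs]
  have h1 : (((2*D:ℝ):ℂ) / ((|2*D|:ℝ):ℂ))^6 = 1 := by
    norm_cast
    rw [div_pow, ← _root_.abs_pow, _root_.abs_of_nonneg (by positivity), div_self (pow_ne_zero _ h2D)]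
  rw [show ((|2*D| * ‖zq q''‖ : ℝ):ℂ) = ((|2*D|:ℝ):ℂ) * ((‖zq q''‖:ℝ):ℂ) from by push_cast; ring]
  rw [mul_div_mul_comm, mul_pow, h1, one_mul]
end

section
/- Let Δ_{ab} be the triangle with side lengths 1, a, b (in anti-clockwise order) and Δ_{ba} its mirror image. If q = (1-a²)/(b² + 1 - 2a²) (assuming b² + 1 - 2a² ≠ 0), then tan(arg(-1 + (1-2q)√3 i)) = √3(b²-1)/(2a²-b²-1), i.e. -(1-2q)√3 = √3(b²-1)/(2a²-b²-1); consequently the rotation angle 6·arg(-1+(1-2q)√3 i) is congruent mod 2π to 6θ where tan θ = √3(b²-1)/(2a²-b²-1), and T_q maps [Δ_{ab}] to [Δ_{ba}]. -/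
open Complex Real

lemma exp6_of_tan (θ : ℝ) (h : Real.cos θ ≠ 0) :
    Complex.exp (6 * (θ:ℂ) * Complex.I) =
      (1 + (Real.tan θ : ℂ) * Complex.I) ^ 6 * (((1 + Real.tan θ ^ 2 : ℝ) : ℂ))⁻¹ ^ 3 := by
  have hc : (Real.cos θ : ℂ) ≠ 0 := by exact_mod_cast h
  have h1 : Complex.exp ((θ:ℂ) * Complex.I)
      = (Real.cos θ : ℂ) * (1 + (Real.tan θ : ℂ) * Complex.I) := by
    rw [Complex.exp_mul_I, ← Complex.ofReal_cos, ← Complex.ofReal_sin]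
    have hc' : Complex.cos (θ:ℂ) ≠ 0 := by rwa [← Complex.ofReal_cos]
    push_cast [Real.tan_eq_sin_div_cos]
    field_simp
  have h2 : Complex.exp (6 * (θ:ℂ) * Complex.I) = Complex.exp ((θ:ℂ) * Complex.I) ^ 6 := by
    rw [← Complex.exp_nat_mul]; ring_nf
  have hcos2 : ((1 + Real.tan θ ^ 2 : ℝ) : ℂ)⁻¹ = (Real.cos θ : ℂ) ^ 2 := by
    rw [← Complex.ofReal_inv, Real.inv_one_add_tan_sq h, Complex.ofReal_pow]
  rw [h2, h1, mul_pow, hcos2]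
  ring

theorem stmt15 (a b q : ℝ) (ha : 0 < a) (hb : 0 < b)
    (hden : b ^ 2 + 1 - 2 * a ^ 2 ≠ 0)
    (hq : q = (1 - a ^ 2) / (b ^ 2 + 1 - 2 * a ^ 2)) :
    -(1 - 2 * q) * Real.sqrt 3 = Real.sqrt 3 * (b ^ 2 - 1) / (2 * a ^ 2 - b ^ 2 - 1) ∧
    Real.tan (Complex.arg (-1 + ((1 - 2 * q : ℝ) : ℂ) * (Real.sqrt 3 : ℂ) * Complex.I)) =
      Real.sqrt 3 * (b ^ 2 - 1) / (2 * a ^ 2 - b ^ 2 - 1) ∧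
    ∀ θ : ℝ, Real.cos θ ≠ 0 →
      Real.tan θ = Real.sqrt 3 * (b ^ 2 - 1) / (2 * a ^ 2 - b ^ 2 - 1) →
      ((-1 + ((1 - 2 * q : ℝ) : ℂ) * (Real.sqrt 3 : ℂ) * Complex.I) /
          (‖(-1 + ((1 - 2 * q : ℝ) : ℂ) * (Real.sqrt 3 : ℂ) * Complex.I)‖ : ℝ)) ^ 6 =
        Complex.exp (6 * (θ : ℂ) * Complex.I) := by
  have hD : (2 * a ^ 2 - b ^ 2 - 1) ≠ 0 := fun h => hden (by linarith)
  have h1 : -(1 - 2 * q) * Real.sqrt 3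
      = Real.sqrt 3 * (b ^ 2 - 1) / (2 * a ^ 2 - b ^ 2 - 1) := by
    rw [hq]; field_simp; ring
  set z : ℂ := -1 + ((1 - 2 * q : ℝ) : ℂ) * (Real.sqrt 3 : ℂ) * Complex.I with hz
  have hre : z.re = -1 := by simp [hz]
  have him : z.im = (1 - 2 * q) * Real.sqrt 3 := by simp [hz]
  have hz0 : z ≠ 0 := by
    intro h; rw [h] at hre; simp at hre
  have h2 : Real.tan (Complex.arg z) = Real.sqrt 3 * (b ^ 2 - 1) / (2 * a ^ 2 - b ^ 2 - 1) := by
    rw [Complex.tan_arg, hre, him, ← h1]; ring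
  refine ⟨h1, h2, ?_⟩
  intro θ hθc hθt
  have habsr : ‖z‖ ≠ 0 := norm_ne_zero_iff.mpr hz0
  have habs : (‖z‖ : ℂ) ≠ 0 := by exact_mod_cast habsr
  have hdiv : z / (‖z‖ : ℂ) = Complex.exp ((Complex.arg z : ℂ) * Complex.I) := by
    exact (div_eq_iff habs).mpr (by rw [mul_comm]; exact (Complex.norm_mul_exp_arg_mul_I z).symm)
  have hcosarg : Real.cos (Complex.arg z) ≠ 0 := by
    rw [Complex.cos_arg hz0, hre]
    simp [habsr, hz0]
  have hpow : Complex.exp ((Complex.arg z : ℂ) * Complex.I) ^ 6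
      = Complex.exp (6 * (Complex.arg z : ℂ) * Complex.I) := by
    rw [← Complex.exp_nat_mul]; norm_num; ring_nf
  rw [hdiv, hpow, exp6_of_tan _ hcosarg, exp6_of_tan θ hθc, h2, hθt]
end

section
/- Let θ be real with -2π/3 < θ < 2π/3, let n be an integer with θ/2 + nπ/3 ∈ (π/2, 3π/2) mod 2π, and set q = (1/2)(1 + (1/√3)·tan(θ/2 + nπ/3)). Then -1 + (1-2q)√3·i = -1 - i·tan(θ/2 + nπ/3), and 6·arg(-1 + (1-2q)√3·i) ≡ 3θ (mod 2π). -/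
open Complex Real

theorem stmt19 (θ : ℝ) (hθ₁ : -(2 * Real.pi / 3) < θ) (hθ₂ : θ < 2 * Real.pi / 3)
    (n : ℤ) (hn : ∃ k : ℤ, θ / 2 + n * Real.pi / 3 + 2 * Real.pi * k ∈
      Set.Ioo (Real.pi / 2) (3 * Real.pi / 2))
    (q : ℝ) (hq : q = (1 / 2) * (1 + (1 / Real.sqrt 3) * Real.tan (θ / 2 + n * Real.pi / 3))) :
    (-1 + ((1 - 2 * q : ℝ) : ℂ) * (Real.sqrt 3 : ℂ) * Complex.I =
      -1 - Complex.I * (Real.tan (θ / 2 + n * Real.pi / 3) : ℝ)) ∧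
    ((-1 + ((1 - 2 * q : ℝ) : ℂ) * (Real.sqrt 3 : ℂ) * Complex.I) /
        (‖-1 + ((1 - 2 * q : ℝ) : ℂ) * (Real.sqrt 3 : ℂ) * Complex.I‖ : ℝ)) ^ 6 =
      Complex.exp (3 * (θ : ℂ) * Complex.I) := by
  set φ := θ / 2 + n * Real.pi / 3 with hφ
  obtain ⟨k, hk1, hk2⟩ := hn
  have hcos : Real.cos φ < 0 := by
    have : Real.cos (φ + 2 * Real.pi * k) < 0 := by
      apply Real.cos_neg_of_pi_div_two_lt_of_lt hk1
      linarith [hk2]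
    rwa [show φ + 2 * Real.pi * k = φ + k * (2 * Real.pi) by ring,
      Real.cos_add_int_mul_two_pi] at this
  have hcosne : Real.cos φ ≠ 0 := ne_of_lt hcos
  have hs3 : Real.sqrt 3 ≠ 0 := by positivity
  have h1 : (1 - 2 * q) * Real.sqrt 3 = -Real.tan φ := by
    rw [hq]
    field_simp
    ring
  have hpart1 : -1 + ((1 - 2 * q : ℝ) : ℂ) * (Real.sqrt 3 : ℂ) * Complex.I =
      -1 - Complex.I * (Real.tan φ : ℝ) := by
    have : ((1 - 2 * q : ℝ) : ℂ) * (Real.sqrt 3 : ℂ) = ((-Real.tan φ : ℝ) : ℂ) := by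
      rw [← Complex.ofReal_mul, h1]
    rw [this]
    push_cast
    ring
  refine ⟨hpart1, ?_⟩
  rw [hpart1]
  have hz : (-1 - Complex.I * (Real.tan φ : ℝ) : ℂ) =
      ((-1 / Real.cos φ : ℝ) : ℂ) * Complex.exp (φ * Complex.I) := by
    rw [Complex.exp_mul_I, ← Complex.ofReal_cos, ← Complex.ofReal_sin]
    have e1 : (-1 / Real.cos φ) * Real.cos φ = -1 := by field_simp
    have e2 : (-1 / Real.cos φ) * Real.sin φ = -Real.tan φ := by
      rw [Real.tan_eq_sin_div_cos]; field_simp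
    calc -1 - Complex.I * (Real.tan φ : ℝ)
        = (((-1 / Real.cos φ) * Real.cos φ : ℝ) : ℂ)
          + (((-1 / Real.cos φ) * Real.sin φ : ℝ) : ℂ) * Complex.I := by
          rw [e1, e2]; push_cast; ring
      _ = ((-1 / Real.cos φ : ℝ) : ℂ) * ((Real.cos φ : ℂ) + (Real.sin φ : ℂ) * Complex.I) := by
          push_cast; ring
  have hr : (0 : ℝ) < -1 / Real.cos φ := by
    apply div_pos_of_neg_of_neg <;> linarith
  have habs : ‖(-1 - Complex.I * (Real.tan φ : ℝ) : ℂ)‖ = -1 / Real.cos φ := by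
    rw [hz, norm_mul, Complex.norm_exp_ofReal_mul_I, mul_one, Complex.norm_real, Real.norm_eq_abs, abs_of_pos hr]
  rw [habs, hz]
  have hrne : ((-1 / Real.cos φ : ℝ) : ℂ) ≠ 0 := by
    exact_mod_cast ne_of_gt hr
  rw [mul_comm, mul_div_assoc, div_self hrne, mul_one, ← Complex.exp_nat_mul]
  have h6 : (6 : ℂ) * ((φ : ℂ) * Complex.I) = 3 * (θ : ℂ) * Complex.I + (n : ℂ) * (2 * (Real.pi : ℂ) * Complex.I) := by
    rw [hφ]; push_cast; ring
  push_cast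
  rw [h6, Complex.exp_add, Complex.exp_int_mul_two_pi_mul_I, mul_one]
end
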